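/- For every integer m ≥ 0, the (m+1) × (m+1) complex matrix J_m whose (k+1, l+1) entry (with 0 ≤ k, l ≤ m) is J_m^(k+1, l+1) = Σ_{h=0}^{⌊l/2⌋} i^(l−2h) · C(m−2k, l−2h) · C(k, h) when 2k ≤ m, and J_m^(k+1, l+1) = conj( J_m^(m−k+1, l+1) ) when 2k > m, is invertible. Consequently, for any complex random variable P = P₁ + i·P₂ with E[|P|^m] < ∞, the vector of real joint moments (E[P₁^m·P₂^0], E[P₁^(m−1)·P₂^1], …, E[P₁^0·P₂^m]) equals J_m^(−1) applied to the vector of complex joint moments (M_{m,0}, M_{m−1,1}, …, M_{0,m}), where M_{m−k,k} = E[P^(m−k)·conj(P)^k]. -/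

import Mathlib

open Finset MeasureTheory Matrix

/-- Entry of the matrix `J_m` for rows with `2k ≤ m`. -/
noncomputable def Jent (m k l : ℕ) : ℂ :=
  ∑ h ∈ Finset.range (l / 2 + 1),
    Complex.I ^ (l - 2 * h) * ((m - 2 * k).choose (l - 2 * h) : ℂ) * (k.choose h : ℂ)

/-- The `(m+1) × (m+1)` matrix `J_m` of Proposition 2. -/
noncomputable def Jmat (m : ℕ) : Matrix (Fin (m + 1)) (Fin (m + 1)) ℂ :=
  fun k l =>
    if 2 * (k : ℕ) ≤ m then Jent m (k : ℕ) (l : ℕ)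
    else (starRingEnd ℂ) (Jent m (m - (k : ℕ)) (l : ℕ))

lemma key1 (m k : ℕ) (h2k : 2*k ≤ m) (x y : ℝ) :
    ((x:ℂ) + (y:ℂ)*Complex.I)^(m-k) * ((x:ℂ) - (y:ℂ)*Complex.I)^k
      = ∑ l ∈ Finset.range (m+1), Jent m k l * (x:ℂ)^(m-l) * (y:ℂ)^l := by
  set n := m - 2*k with hn
  have hsplit : m - k = n + k := by omega
  have h2 : ((x:ℂ) + y*Complex.I) * ((x:ℂ) - y*Complex.I) = (y:ℂ)^2 + (x:ℂ)^2 := by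
    linear_combination (-(y:ℂ)^2) * Complex.I_sq
  have h1 : ((x:ℂ) + y*Complex.I)^(m-k) * ((x:ℂ) - y*Complex.I)^k
      = ((y:ℂ)^2 + (x:ℂ)^2)^k * ((y:ℂ)*Complex.I + (x:ℂ))^n := by
    rw [hsplit, show ((x:ℂ)+y*Complex.I)^(n+k) * ((x:ℂ)-y*Complex.I)^k
      = (((x:ℂ)+y*Complex.I)*((x:ℂ)-y*Complex.I))^k * ((y:ℂ)*Complex.I+(x:ℂ))^n from by
        rw [mul_pow]; ring, h2]
  rw [h1, add_pow, add_pow, Finset.sum_mul_sum, ← Finset.sum_product']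
  have hstep : ∀ p ∈ Finset.range (k+1) ×ˢ Finset.range (n+1),
      (((y:ℂ)^2)^p.1 * ((x:ℂ)^2)^(k-p.1) * (k.choose p.1 : ℂ)) *
        (((y:ℂ)*Complex.I)^p.2 * (x:ℂ)^(n-p.2) * (n.choose p.2 : ℂ))
      = Complex.I^p.2 * (n.choose p.2 : ℂ) * (k.choose p.1 : ℂ) * (x:ℂ)^(m-(2*p.1+p.2)) * (y:ℂ)^(2*p.1+p.2) := by
    rintro ⟨h, j⟩ hp
    simp only [Finset.mem_product, Finset.mem_range] at hp
    have e1 : ((x:ℂ)^2)^(k-h) * (x:ℂ)^(n-j) = (x:ℂ)^(m-(2*h+j)) := by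
      rw [← pow_mul, ← pow_add]; congr 1; omega
    have e2 : ((y:ℂ)^2)^h * (y:ℂ)^j = (y:ℂ)^(2*h+j) := by
      rw [← pow_mul, ← pow_add]
    rw [← e1, ← e2]; ring
  rw [Finset.sum_congr rfl hstep]
  trans (∑ p ∈ ((Finset.range (m+1)) ×ˢ (Finset.range (m+1))).filter (fun p => 2*p.1+p.2 ≤ m),
      Complex.I^p.2 * (n.choose p.2 : ℂ) * (k.choose p.1 : ℂ) * (x:ℂ)^(m-(2*p.1+p.2)) * (y:ℂ)^(2*p.1+p.2))
  · refine Finset.sum_subset ?_ ?_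
    · rintro ⟨h, j⟩ hp
      simp only [Finset.mem_product, Finset.mem_range] at hp
      simp only [Finset.mem_filter, Finset.mem_product, Finset.mem_range]
      omega
    · rintro ⟨h, j⟩ hp hnp
      simp only [Finset.mem_filter, Finset.mem_product, Finset.mem_range] at hp
      simp only [Finset.mem_product, Finset.mem_range, not_and_or, not_lt] at hnp
      rcases hnp with hh | hj
      · rw [Nat.choose_eq_zero_of_lt (show k < h by omega)]; simp
      · rw [Nat.choose_eq_zero_of_lt (show n < j by omega)]; simp
  · have hrhs : ∀ l ∈ Finset.range (m+1), Jent m k l * (x:ℂ)^(m-l) * (y:ℂ)^l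
        = ∑ h ∈ Finset.range (l/2+1),
            Complex.I ^ (l - 2*h) * (n.choose (l - 2*h) : ℂ) * (k.choose h : ℂ) * (x:ℂ)^(m-l) * (y:ℂ)^l := by
      intro l _
      rw [Jent, Finset.sum_mul, Finset.sum_mul, ← hn]
    rw [Finset.sum_congr rfl hrhs, Finset.sum_sigma']
    refine Finset.sum_nbij' (fun p => ⟨2*p.1+p.2, p.1⟩) (fun q => (q.2, q.1 - 2*q.2)) ?_ ?_ ?_ ?_ ?_
    · rintro ⟨h, j⟩ hp
      simp only [Finset.mem_filter, Finset.mem_product, Finset.mem_range] at hp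
      simp only [Finset.mem_sigma, Finset.mem_range]
      omega
    · rintro ⟨l, h⟩ hq
      simp only [Finset.mem_sigma, Finset.mem_range] at hq
      simp only [Finset.mem_filter, Finset.mem_product, Finset.mem_range]
      omega
    · rintro ⟨h, j⟩ hp
      have : 2*h+j-2*h = j := by omega
      simp [this]

    · rintro ⟨l, h⟩ hq
      simp only [Finset.mem_sigma, Finset.mem_range] at hq
      have hl : 2*h + (l - 2*h) = l := by omega
      simp [hl]
    · rintro ⟨h, j⟩ hp
      simp only
      rw [show 2*h+j-(2*h) = j from by omega]

lemma key2 (m : ℕ) (k : Fin (m+1)) (x y : ℝ) :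
    ((x:ℂ) + (y:ℂ)*Complex.I)^(m-(k:ℕ)) * ((x:ℂ) - (y:ℂ)*Complex.I)^(k:ℕ)
      = ∑ l : Fin (m+1), Jmat m k l * (x:ℂ)^(m-(l:ℕ)) * (y:ℂ)^(l:ℕ) := by
  have hk : (k:ℕ) ≤ m := Nat.lt_succ_iff.mp k.isLt
  have hsum : (∑ l : Fin (m+1), Jmat m k l * (x:ℂ)^(m-(l:ℕ)) * (y:ℂ)^(l:ℕ))
      = ∑ l ∈ Finset.range (m+1),
          (if 2*(k:ℕ) ≤ m then Jent m (k:ℕ) l else (starRingEnd ℂ) (Jent m (m-(k:ℕ)) l))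
            * (x:ℂ)^(m-l) * (y:ℂ)^l :=
    Fin.sum_univ_eq_sum_range
      (fun l => (if 2*(k:ℕ) ≤ m then Jent m (k:ℕ) l else (starRingEnd ℂ) (Jent m (m-(k:ℕ)) l))
            * (x:ℂ)^(m-l) * (y:ℂ)^l) (m+1)
  rw [hsum]
  by_cases h : 2*(k:ℕ) ≤ m
  · simp only [if_pos h]
    exact key1 m k h x y
  · simp only [if_neg h]
    have hk' : 2*(m-(k:ℕ)) ≤ m := by omega
    have hc := congrArg (starRingEnd ℂ) (key1 m (m-(k:ℕ)) hk' x y)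
    rw [Nat.sub_sub_self hk] at hc
    simp only [_root_.map_mul, map_pow, map_sum, _root_.map_add, map_sub, Complex.conj_ofReal,
      Complex.conj_I] at hc
    have e1 : (x:ℂ) + (y:ℂ) * -Complex.I = (x:ℂ) - y*Complex.I := by ring
    have e2 : (x:ℂ) - (y:ℂ) * -Complex.I = (x:ℂ) + y*Complex.I := by ring
    rw [e1, e2, mul_comm] at hc
    exact hc

/-- Proposition 2: `J_m` is invertible and the real joint moments of
`P = P₁ + i P₂` are obtained from the complex joint moments via `J_m⁻¹`. -/
theorem stmt_1 {Ω : Type*} [MeasurableSpace Ω] (μ : Measure Ω) [IsProbabilityMeasure μ]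
    (m : ℕ) (P : Ω → ℂ) (hP : Measurable P)
    (hint : Integrable (fun ω => ‖P ω‖ ^ m) μ) :
    IsUnit (Jmat m).det ∧
      (fun l : Fin (m + 1) =>
          ((∫ ω, (P ω).re ^ (m - (l : ℕ)) * (P ω).im ^ (l : ℕ) ∂μ : ℝ) : ℂ)) =
        (Jmat m)⁻¹ *ᵥ
          (fun k : Fin (m + 1) =>
            ∫ ω, (P ω) ^ (m - (k : ℕ)) * ((starRingEnd ℂ) (P ω)) ^ (k : ℕ) ∂μ) := by
  -- notation
  set rvec : Fin (m+1) → ℂ := fun l =>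
    ((∫ ω, (P ω).re ^ (m - (l : ℕ)) * (P ω).im ^ (l : ℕ) ∂μ : ℝ) : ℂ) with hrvec
  set cvec : Fin (m+1) → ℂ := fun k =>
    ∫ ω, (P ω) ^ (m - (k : ℕ)) * ((starRingEnd ℂ) (P ω)) ^ (k : ℕ) ∂μ with hcvec
  -- integrability of the real moments
  have hrint : ∀ l : ℕ, l ≤ m →
      Integrable (fun ω => (P ω).re ^ (m - l) * (P ω).im ^ l) μ := by
    intro l hl
    refine hint.mono' ?_ ?_
    · exact (((Complex.measurable_re.comp hP).pow_const _).mul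
        ((Complex.measurable_im.comp hP).pow_const _)).aestronglyMeasurable
    · filter_upwards with ω
      have h1 : |(P ω).re| ≤ ‖P ω‖ := Complex.abs_re_le_norm _
      have h2 : |(P ω).im| ≤ ‖P ω‖ := Complex.abs_im_le_norm _
      have h0 : (0:ℝ) ≤ ‖P ω‖ := norm_nonneg _
      calc ‖(P ω).re ^ (m - l) * (P ω).im ^ l‖
          = |(P ω).re| ^ (m - l) * |(P ω).im| ^ l := by
            rw [norm_mul, norm_pow, norm_pow]; rfl
        _ ≤ ‖P ω‖ ^ (m - l) * ‖P ω‖ ^ l :=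
            mul_le_mul (pow_le_pow_left₀ (abs_nonneg _) h1 _)
              (pow_le_pow_left₀ (abs_nonneg _) h2 _)
              (pow_nonneg (abs_nonneg _) _) (pow_nonneg h0 _)
        _ = ‖P ω‖ ^ m := by rw [← pow_add]; congr 1; omega
  -- integrability of the complex moments
  have hcint : ∀ k : ℕ, k ≤ m →
      Integrable (fun ω => (P ω) ^ (m - k) * ((starRingEnd ℂ) (P ω)) ^ k) μ := by
    intro k hk
    refine hint.mono' ?_ ?_
    · exact ((hP.pow_const _).mul
        (((Complex.continuous_conj.measurable).comp hP).pow_const _)).aestronglyMeasurable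
    · filter_upwards with ω
      calc ‖(P ω) ^ (m - k) * ((starRingEnd ℂ) (P ω)) ^ k‖
          = ‖P ω‖ ^ (m - k) * ‖P ω‖ ^ k := by
            rw [norm_mul, norm_pow, norm_pow, RCLike.norm_conj]
        _ = ‖P ω‖ ^ m := by rw [← pow_add]; congr 1; omega
        _ ≤ ‖P ω‖ ^ m := le_rfl
  -- the key linear relation : Jmat *ᵥ rvec = cvec
  have hterm : ∀ (l : Fin (m+1)) (c : ℂ),
      Integrable (fun ω => c * (((P ω).re : ℂ) ^ (m - (l:ℕ)) * ((P ω).im : ℂ) ^ (l:ℕ))) μ := by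
    intro l c
    have := ((hrint l (Nat.lt_succ_iff.mp l.isLt)).ofReal (𝕜 := ℂ)).const_mul c
    simpa [Complex.ofReal_mul, Complex.ofReal_pow] using this
  have hvec : (Jmat m) *ᵥ rvec = cvec := by
    funext k
    have hk : (k:ℕ) ≤ m := Nat.lt_succ_iff.mp k.isLt
    have hptw : ∀ ω, (P ω) ^ (m - (k:ℕ)) * ((starRingEnd ℂ) (P ω)) ^ (k:ℕ)
        = ∑ l : Fin (m+1), Jmat m k l *
            (((P ω).re : ℂ) ^ (m - (l:ℕ)) * ((P ω).im : ℂ) ^ (l:ℕ)) := by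
      intro ω
      have hz : ((P ω).re : ℂ) + ((P ω).im : ℂ) * Complex.I = P ω := Complex.re_add_im _
      have hzc : ((P ω).re : ℂ) - ((P ω).im : ℂ) * Complex.I = (starRingEnd ℂ) (P ω) := by
        simp [Complex.ext_iff]
      have hkey := key2 m k (P ω).re (P ω).im
      rw [hz, hzc] at hkey
      rw [hkey]
      exact Finset.sum_congr rfl fun l _ => by ring
    calc ((Jmat m) *ᵥ rvec) k = ∑ l : Fin (m+1), Jmat m k l * rvec l := rfl
      _ = ∑ l : Fin (m+1), ∫ ω, Jmat m k l *
            (((P ω).re : ℂ) ^ (m - (l:ℕ)) * ((P ω).im : ℂ) ^ (l:ℕ)) ∂μ := by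
          refine Finset.sum_congr rfl fun l _ => ?_
          rw [MeasureTheory.integral_const_mul]
          congr 1
          have hi := hrint (l:ℕ) (Nat.lt_succ_iff.mp l.isLt)
          have hcc := ContinuousLinearMap.integral_comp_comm Complex.ofRealCLM hi
          simp only [Complex.ofRealCLM_apply] at hcc
          rw [hrvec]
          simp only
          rw [← hcc]
          congr 1
          funext ω
          push_cast
          ring
      _ = ∫ ω, ∑ l : Fin (m+1), Jmat m k l *
            (((P ω).re : ℂ) ^ (m - (l:ℕ)) * ((P ω).im : ℂ) ^ (l:ℕ)) ∂μ := by
          rw [MeasureTheory.integral_finset_sum]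
          exact fun l _ => hterm l _
      _ = cvec k := by
          rw [hcvec]
          simp only
          congr 1
          funext ω
          rw [hptw ω]
  -- invertibility
  have hunit : IsUnit (Jmat m).det := by
    rw [isUnit_iff_ne_zero]
    intro hdet
    have hdetT : (Jmat m)ᵀ.det = 0 := by rwa [Matrix.det_transpose]
    obtain ⟨v, hv0, hv⟩ := Matrix.exists_mulVec_eq_zero_iff.mpr hdetT
    set p : Polynomial ℂ := ∑ k : Fin (m+1), Polynomial.C (v k) * Polynomial.X ^ (k:ℕ) with hp
    have hsum0 : ∀ x y : ℝ,
        ∑ k : Fin (m+1), v k * (((x:ℂ) + y*Complex.I)^(m-(k:ℕ)) * ((x:ℂ) - y*Complex.I)^(k:ℕ)) = 0 := by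
      intro x y
      calc ∑ k : Fin (m+1), v k * (((x:ℂ) + y*Complex.I)^(m-(k:ℕ)) * ((x:ℂ) - y*Complex.I)^(k:ℕ))
          = ∑ k : Fin (m+1), ∑ l : Fin (m+1),
              v k * Jmat m k l * (x:ℂ)^(m-(l:ℕ)) * (y:ℂ)^(l:ℕ) := by
            refine Finset.sum_congr rfl fun k _ => ?_
            rw [key2 m k x y, Finset.mul_sum]
            exact Finset.sum_congr rfl fun l _ => by ring
        _ = ∑ l : Fin (m+1), (∑ k : Fin (m+1), Jmat m k l * v k) * ((x:ℂ)^(m-(l:ℕ)) * (y:ℂ)^(l:ℕ)) := by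
            rw [Finset.sum_comm]
            refine Finset.sum_congr rfl fun l _ => ?_
            rw [Finset.sum_mul]
            exact Finset.sum_congr rfl fun k _ => by ring
        _ = 0 := by
            refine Finset.sum_eq_zero fun l _ => ?_
            have : ((Jmat m)ᵀ *ᵥ v) l = ∑ k : Fin (m+1), Jmat m k l * v k := rfl
            rw [← this, hv]
            simp
    have hroot : ∀ θ ∈ Set.Ioo (0:ℝ) 1, p.IsRoot (Complex.exp (-(2*θ)*Complex.I)) := by
      intro θ hθ
      set z : ℂ := Complex.exp (θ*Complex.I) with hzdef
      have hz0 : z ≠ 0 := Complex.exp_ne_zero _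
      have hx : ((Real.cos θ : ℝ) : ℂ) + ((Real.sin θ : ℝ) : ℂ) * Complex.I = z := by
        rw [hzdef, Complex.exp_mul_I]
        push_cast
        rfl
      have hxc : ((Real.cos θ : ℝ) : ℂ) - ((Real.sin θ : ℝ) : ℂ) * Complex.I = z⁻¹ := by
        rw [← Complex.exp_neg]
        rw [show -(↑θ*Complex.I) = ((-θ:ℝ):ℂ)*Complex.I by push_cast; ring, Complex.exp_mul_I]
        push_cast
        simp [Real.cos_neg, Real.sin_neg]
        ring
      have h0 := hsum0 (Real.cos θ) (Real.sin θ)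
      rw [hx, hxc] at h0
      have hterm2 : ∀ k : Fin (m+1), z^(m-(k:ℕ)) * (z⁻¹)^(k:ℕ)
          = z^m * (((z^2)⁻¹)^(k:ℕ)) := by
        intro k
        have hk : (k:ℕ) ≤ m := Nat.lt_succ_iff.mp k.isLt
        have h1 : z^(m-(k:ℕ)) * z^(k:ℕ) = z^m := by rw [← pow_add]; congr 1; omega
        field_simp
        rw [← h1]
        rw [mul_assoc, ← mul_pow, pow_two, one_div, one_div, mul_inv, ← mul_assoc, mul_inv_cancel₀ hz0, one_mul]
      rw [Finset.sum_congr rfl (fun k _ => by rw [hterm2 k])] at h0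
      have h1 : z^m * (∑ k : Fin (m+1), v k * ((z^2)⁻¹)^(k:ℕ)) = 0 := by
        rw [Finset.mul_sum, ← h0]
        exact Finset.sum_congr rfl fun k _ => by ring
      have h2 : (∑ k : Fin (m+1), v k * ((z^2)⁻¹)^(k:ℕ)) = 0 := by
        rcases mul_eq_zero.mp h1 with h | h
        · exact absurd h (pow_ne_zero _ hz0)
        · exact h
      have hu : (z^2)⁻¹ = Complex.exp (-(2*θ)*Complex.I) := by
        rw [hzdef, ← Complex.exp_nat_mul, ← Complex.exp_neg]
        congr 1
        push_cast
        ring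
      rw [hu] at h2
      simp only [Polynomial.IsRoot, hp, Polynomial.eval_finset_sum, Polynomial.eval_mul,
        Polynomial.eval_C, Polynomial.eval_pow, Polynomial.eval_X]
      exact h2
    have hp0 : p = 0 := by
      apply Polynomial.eq_zero_of_infinite_isRoot
      have hinj : Set.InjOn (fun θ : ℝ => Complex.exp (-(2*θ)*Complex.I)) (Set.Ioo 0 1) := by
        intro a ha b hb hab
        simp only at hab
        obtain ⟨n, hn⟩ := Complex.exp_eq_exp_iff_exists_int.mp hab
        have him := congrArg Complex.im hn
        simp at him
        have hπ := Real.pi_gt_three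
        have hn0 : n = 0 := by
          rcases lt_trichotomy n 0 with h | h | h
          · exfalso
            have hn1 : n ≤ -1 := by omega
            have : (n:ℝ) ≤ -1 := by exact_mod_cast hn1
            nlinarith [ha.1, ha.2, hb.1, hb.2]
          · exact h
          · exfalso
            have : (1:ℝ) ≤ n := by exact_mod_cast h
            nlinarith [ha.1, ha.2, hb.1, hb.2]
        rw [hn0] at him
        push_cast at him
        linarith [him]
      have hsub : (fun θ : ℝ => Complex.exp (-(2*θ)*Complex.I)) '' Set.Ioo 0 1
          ⊆ {x : ℂ | p.IsRoot x} := by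
        rintro u ⟨θ, hθ, rfl⟩
        exact hroot θ hθ
      exact ((Set.Ioo_infinite (show (0:ℝ) < 1 by norm_num)).image hinj).mono hsub
    have hvz : v = 0 := by
      funext k
      have hcoeff : p.coeff (k:ℕ) = v k := by
        rw [hp, Polynomial.finset_sum_coeff]
        rw [Finset.sum_eq_single k]
        · simp
        · intro b _ hb
          have : (b:ℕ) ≠ (k:ℕ) := fun hbk => hb (Fin.val_injective hbk)
          simp [Polynomial.coeff_C_mul, Polynomial.coeff_X_pow, this, Ne.symm this]
        · simp
      rw [hp0] at hcoeff
      simpa using hcoeff.symm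
    exact hv0 hvz
  refine ⟨hunit, ?_⟩
  have : rvec = (Jmat m)⁻¹ *ᵥ cvec := by
    rw [← hvec, Matrix.mulVec_mulVec, Matrix.nonsing_inv_mul _ hunit, Matrix.one_mulVec]
  exact this
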